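/- Let I ⊆ ℝ be an open interval and let τ₀, τ₁ : I → ℂ be twice differentiable and nowhere vanishing on I. Define v = τ₁′/τ₁ − τ₀′/τ₀ (the logarithmic derivative of τ₁/τ₀), w = τ₀′/τ₀ + τ₁′/τ₁ (the logarithmic derivative of τ₀τ₁), and u = −2·(τ₀′/τ₀)′. Then the following are equivalent on I: (a) the bilinear relation τ₀″τ₁ − 2τ₀′τ₁′ + τ₀τ₁″ = 0 holds; (b) u = v′ + v² (i.e. u is the Miura transform of v); (c) v² = −w′. -/

import Mathlib

private lemma miura_alg (a0 a1 b0 b1 c0 c1 : ℂ) (h0 : a0 ≠ 0) (h1 : a1 ≠ 0) :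
    ((c0*a1 - 2*b0*b1 + a0*c1 = 0)
      ↔ (-2*((c0*a0-b0*b0)/a0^2)
          = ((c1*a1-b1*b1)/a1^2 - (c0*a0-b0*b0)/a0^2) + (b1/a1 - b0/a0)^2)) ∧
    ((-2*((c0*a0-b0*b0)/a0^2)
          = ((c1*a1-b1*b1)/a1^2 - (c0*a0-b0*b0)/a0^2) + (b1/a1 - b0/a0)^2)
      ↔ ((b1/a1 - b0/a0)^2
          = -((c0*a0-b0*b0)/a0^2 + (c1*a1-b1*b1)/a1^2))) := by
  have key : ∀ X Y : ℂ, (X = Y) ↔ X * (a0^2*a1^2) = Y * (a0^2*a1^2) :=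
    fun X Y => ⟨fun h => by rw [h],
      fun h => mul_right_cancel₀ (mul_ne_zero (pow_ne_zero _ h0) (pow_ne_zero _ h1)) h⟩
  have e1 : (-2*((c0*a0-b0*b0)/a0^2)) * (a0^2*a1^2)
      = -2*(c0*a0-b0*b0)*a1^2 := by field_simp
  have e2 : (((c1*a1-b1*b1)/a1^2 - (c0*a0-b0*b0)/a0^2) + (b1/a1 - b0/a0)^2) * (a0^2*a1^2)
      = (c1*a1-b1*b1)*a0^2 - (c0*a0-b0*b0)*a1^2 + (b1*a0 - b0*a1)^2 := by field_simp
  have e3 : ((b1/a1 - b0/a0)^2) * (a0^2*a1^2) = (b1*a0 - b0*a1)^2 := by field_simp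
  have e4 : (-((c0*a0-b0*b0)/a0^2 + (c1*a1-b1*b1)/a1^2)) * (a0^2*a1^2)
      = -((c0*a0-b0*b0)*a1^2 + (c1*a1-b1*b1)*a0^2) := by field_simp
  constructor
  · rw [key _ (((c1*a1-b1*b1)/a1^2 - (c0*a0-b0*b0)/a0^2) + (b1/a1 - b0/a0)^2), e1, e2]
    constructor
    · intro h; linear_combination -(a0*a1) * h
    · intro h
      have h2 : a0*a1*(c0*a1 - 2*b0*b1 + a0*c1) = a0*a1*0 := by linear_combination -h
      exact mul_left_cancel₀ (mul_ne_zero h0 h1) h2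
  · rw [key _ (((c1*a1-b1*b1)/a1^2 - (c0*a0-b0*b0)/a0^2) + (b1/a1 - b0/a0)^2), e1, e2,
      key _ (-((c0*a0-b0*b0)/a0^2 + (c1*a1-b1*b1)/a1^2)), e3, e4]
    constructor
    · intro h; linear_combination -h
    · intro h; linear_combination -h

/-- For nowhere-vanishing twice differentiable tau functions `τ₀, τ₁` on an open interval,
with `v = (log(τ₁/τ₀))'`, `w = (log(τ₀τ₁))'` and `u = -2 (log τ₀)''`, the bilinear relation
`τ₀'' τ₁ - 2 τ₀' τ₁' + τ₀ τ₁'' = 0` holds iff `u = v' + v²` (the Miura transform) iff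
`v² = -w'` (Theorem 2.6(iii) of the paper). -/
theorem miura_equivalences
    (I : Set ℝ) (hI : IsOpen I) (hI' : I.OrdConnected)
    (τ₀ τ₁ : ℝ → ℂ)
    (h₀ : ∀ x ∈ I, τ₀ x ≠ 0) (h₁ : ∀ x ∈ I, τ₁ x ≠ 0)
    (hd₀ : ∀ x ∈ I, DifferentiableAt ℝ τ₀ x)
    (hd₀' : ∀ x ∈ I, DifferentiableAt ℝ (deriv τ₀) x)
    (hd₁ : ∀ x ∈ I, DifferentiableAt ℝ τ₁ x)
    (hd₁' : ∀ x ∈ I, DifferentiableAt ℝ (deriv τ₁) x)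
    (v w u : ℝ → ℂ)
    (hv : ∀ x : ℝ, v x = deriv τ₁ x / τ₁ x - deriv τ₀ x / τ₀ x)
    (hw : ∀ x : ℝ, w x = deriv τ₀ x / τ₀ x + deriv τ₁ x / τ₁ x)
    (hu : ∀ x : ℝ, u x = -2 * deriv (fun y => deriv τ₀ y / τ₀ y) x) :
    ((∀ x ∈ I, deriv (deriv τ₀) x * τ₁ x - 2 * deriv τ₀ x * deriv τ₁ x
        + τ₀ x * deriv (deriv τ₁) x = 0)
      ↔ (∀ x ∈ I, u x = deriv v x + v x ^ 2)) ∧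
    ((∀ x ∈ I, u x = deriv v x + v x ^ 2)
      ↔ (∀ x ∈ I, v x ^ 2 = -deriv w x)) := by
  have main : ∀ x ∈ I,
      ((deriv (deriv τ₀) x * τ₁ x - 2 * deriv τ₀ x * deriv τ₁ x
          + τ₀ x * deriv (deriv τ₁) x = 0) ↔ (u x = deriv v x + v x ^ 2)) ∧
      ((u x = deriv v x + v x ^ 2) ↔ (v x ^ 2 = -deriv w x)) := by
    intro x hx
    have h0 := h₀ x hx
    have h1 := h₁ x hx
    have dg0 : deriv (fun y => deriv τ₀ y / τ₀ y) x
        = (deriv (deriv τ₀) x * τ₀ x - deriv τ₀ x * deriv τ₀ x) / τ₀ x ^ 2 :=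
      deriv_div (hd₀' x hx) (hd₀ x hx) h0
    have dg1 : deriv (fun y => deriv τ₁ y / τ₁ y) x
        = (deriv (deriv τ₁) x * τ₁ x - deriv τ₁ x * deriv τ₁ x) / τ₁ x ^ 2 :=
      deriv_div (hd₁' x hx) (hd₁ x hx) h1
    have dv : deriv v x = deriv (fun y => deriv τ₁ y / τ₁ y) x
        - deriv (fun y => deriv τ₀ y / τ₀ y) x := by
      have hveq : v = fun y => (fun z => deriv τ₁ z / τ₁ z) y
          - (fun z => deriv τ₀ z / τ₀ z) y := funext hv
      rw [hveq]
      exact deriv_sub ((hd₁' x hx).div (hd₁ x hx) h1)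
        ((hd₀' x hx).div (hd₀ x hx) h0)
    have dw : deriv w x = deriv (fun y => deriv τ₀ y / τ₀ y) x
        + deriv (fun y => deriv τ₁ y / τ₁ y) x := by
      have hweq : w = fun y => (fun z => deriv τ₀ z / τ₀ z) y
          + (fun z => deriv τ₁ z / τ₁ z) y := funext hw
      rw [hweq]
      exact deriv_add ((hd₀' x hx).div (hd₀ x hx) h0)
        ((hd₁' x hx).div (hd₁ x hx) h1)
    rw [hu x, hv x, dv, dw, dg0, dg1]
    have := miura_alg (τ₀ x) (τ₁ x) (deriv τ₀ x) (deriv τ₁ x)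
      (deriv (deriv τ₀) x) (deriv (deriv τ₁) x) h0 h1
    convert this using 3
  exact ⟨⟨fun h x hx => ((main x hx).1).mp (h x hx),
          fun h x hx => ((main x hx).1).mpr (h x hx)⟩,
        ⟨fun h x hx => ((main x hx).2).mp (h x hx),
          fun h x hx => ((main x hx).2).mpr (h x hx)⟩⟩
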